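/- Let X be a Banach space of type 2 and cotype p (2 ≤ p < ∞) and let B = {e_k} be a seminormalized quasi-greedy basis of X. Then there are constants c, C with c·|Γ|^{1/p} ≤ ‖Σ_{k∈Γ} e_k‖ ≤ C·|Γ|^{1/2} for every finite Γ, and consequently μ(N) ≲ N^{1/2 − 1/p}. -/

import Mathlib

open Finset Filter

/-- A (seminormalized Schauder) basis of a real normed space, given by the basis
vectors `e k` together with the coefficient functionals `coeff k`. -/
structure QGBasis (X : Type*) [NormedAddCommGroup X] [NormedSpace ℝ X] where
  e : ℕ → X
  coeff : ℕ → X → ℝ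
  coeff_add : ∀ k x y, coeff k (x + y) = coeff k x + coeff k y
  coeff_smul : ∀ (k : ℕ) (c : ℝ) (x : X), coeff k (c • x) = c * coeff k x
  coeff_e : ∀ j k, coeff j (e k) = if j = k then 1 else 0
  expansion : ∀ x : X,
    Tendsto (fun N => ∑ k ∈ Finset.range N, coeff k x • e k) atTop (nhds x)
  c_norm : ℝ
  C_norm : ℝ
  c_norm_pos : 0 < c_norm
  norm_e_ge : ∀ k, c_norm ≤ ‖e k‖
  norm_e_le : ∀ k, ‖e k‖ ≤ C_norm

namespace QGBasis

variable {X : Type*} [NormedAddCommGroup X] [NormedSpace ℝ X] (B : QGBasis X)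

/-- `π` enumerates the coefficients of `x` in decreasing order of modulus;
position `k` (zero-based) carries the `(k+1)`-st largest coefficient. -/
def IsGreedyPerm (x : X) (π : ℕ → ℕ) : Prop :=
  Function.Bijective π ∧ ∀ k, |B.coeff (π (k + 1)) x| ≤ |B.coeff (π k) x|

/-- The thresholding greedy approximation of order `N` associated to the
greedy enumeration `π`. -/
def G (π : ℕ → ℕ) (N : ℕ) (x : X) : X :=
  ∑ k ∈ Finset.range N, B.coeff (π k) x • B.e (π k)

/-- `B` is quasi-greedy with constant `K`. -/
def QuasiGreedyWith (K : ℝ) : Prop :=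
  ∀ (x : X) (π : ℕ → ℕ), B.IsGreedyPerm x π → ∀ N,
    ‖B.G π N x‖ ≤ K * ‖x‖ ∧ ‖x - B.G π N x‖ ≤ K * ‖x‖

/-- Coordinate projection onto the index set `Γ`. -/
def S (Γ : Finset ℕ) (x : X) : X := ∑ k ∈ Γ, B.coeff k x • B.e k

/-- Right democracy function. -/
noncomputable def hr (N : ℕ) : ℝ :=
  sSup {r | ∃ Γ : Finset ℕ, Γ.card = N ∧ r = ‖∑ k ∈ Γ, B.e k‖}

/-- Left democracy function. -/
noncomputable def hl (N : ℕ) : ℝ :=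
  sInf {r | ∃ Γ : Finset ℕ, Γ.card = N ∧ r = ‖∑ k ∈ Γ, B.e k‖}

/-- The democracy ratio `μ(N) = sup_{1 ≤ k ≤ N} h_r(k)/h_l(k)`. -/
noncomputable def mu (N : ℕ) : ℝ :=
  sSup {r | ∃ k, 1 ≤ k ∧ k ≤ N ∧ r = B.hr k / B.hl k}

/-- Best `N`-term approximation error. -/
noncomputable def sigma (N : ℕ) (x : X) : ℝ :=
  sInf {r | ∃ (Γ : Finset ℕ) (b : ℕ → ℝ),
    Γ.card ≤ N ∧ r = ‖x - ∑ k ∈ Γ, b k • B.e k‖}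

/-- `Γ` is a greedy set for `x`: every coefficient inside dominates every
coefficient outside. -/
def IsGreedySet (x : X) (Γ : Finset ℕ) : Prop :=
  ∀ j ∈ Γ, ∀ i ∉ Γ, |B.coeff i x| ≤ |B.coeff j x|

lemma coeff_zero (j : ℕ) : B.coeff j 0 = 0 := by
  have := B.coeff_add j 0 0
  simpa using this.symm

lemma coeff_finsum (j : ℕ) (Γ : Finset ℕ) (a : ℕ → ℝ) :
    B.coeff j (∑ k ∈ Γ, a k • B.e k) = if j ∈ Γ then a j else 0 := by
  classical
  let f : X →+ ℝ := AddMonoidHom.mk' (B.coeff j) (fun x y => B.coeff_add j x y)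
  have : B.coeff j (∑ k ∈ Γ, a k • B.e k) = ∑ k ∈ Γ, B.coeff j (a k • B.e k) :=
    map_sum f _ _
  rw [this]
  simp only [B.coeff_smul, B.coeff_e, mul_ite, mul_one, mul_zero]
  simp [Finset.sum_ite_eq]

lemma one_le_K {K : ℝ} (hK : B.QuasiGreedyWith K) : 1 ≤ K := by
  have hperm : B.IsGreedyPerm (B.e 0) id := by
    refine ⟨Function.bijective_id, fun k => ?_⟩
    simp only [id_eq, B.coeff_e]
    rcases Nat.eq_zero_or_pos k with hk | hk
    · subst hk; simp
    · rw [if_neg (by omega), if_neg (by omega)]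
  have h := (hK (B.e 0) id hperm 0).2
  have hG : B.G id 0 (B.e 0) = 0 := by simp [QGBasis.G]
  rw [hG, sub_zero] at h
  have hpos : 0 < ‖B.e 0‖ := lt_of_lt_of_le B.c_norm_pos (B.norm_e_ge 0)
  nlinarith

theorem proj_bound {K : ℝ} (hK : B.QuasiGreedyWith K)
    {Γ Γ' : Finset ℕ} (hsub : Γ' ⊆ Γ) (a : ℕ → ℝ) (ha : ∀ k ∈ Γ, |a k| = 1) :
    ‖∑ k ∈ Γ', a k • B.e k‖ ≤ K * ‖∑ k ∈ Γ, a k • B.e k‖ := by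
  classical
  set x := ∑ k ∈ Γ, a k • B.e k with hx
  set l : List ℕ := Γ'.sort (· ≤ ·) ++ (Γ \ Γ').sort (· ≤ ·) with hl
  have hcard : Γ'.card ≤ Γ.card := Finset.card_le_card hsub
  have hlen : l.length = Γ.card := by
    simp only [hl, List.length_append, Finset.length_sort, Finset.card_sdiff_of_subset hsub]
    omega
  have hmem_l : ∀ m, m ∈ l ↔ m ∈ Γ := by
    intro m
    simp only [hl, List.mem_append, Finset.mem_sort, Finset.mem_sdiff]
    constructor
    · rintro (h | ⟨h, _⟩); exacts [hsub h, h]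
    · intro h; by_cases h' : m ∈ Γ'; exacts [Or.inl h', Or.inr ⟨h, h'⟩]
  have hnodup : l.Nodup := by
    refine List.Nodup.append (Finset.sort_nodup _ _) (Finset.sort_nodup _ _) ?_
    intro m hm1 hm2
    rw [Finset.mem_sort] at hm1
    rw [Finset.mem_sort, Finset.mem_sdiff] at hm2
    exact hm2.2 hm1
  set q : ℕ → Prop := fun m => m ∉ Γ with hq
  have hq_inf : (setOf q).Infinite := by
    have : setOf q = (↑Γ : Set ℕ)ᶜ := rfl
    rw [this]
    exact Set.Finite.infinite_compl (Γ.finite_toSet)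
  set π : ℕ → ℕ := fun k => if h : k < l.length then l.get ⟨k, h⟩
    else Nat.nth q (k - l.length) with hπ
  have hπ_mem : ∀ k (h : k < l.length), π k ∈ Γ := by
    intro k h
    rw [hπ]; simp only [dif_pos h]
    exact (hmem_l _).1 (l.get_mem ⟨k, h⟩)
  have hπ_nmem : ∀ k, l.length ≤ k → π k ∉ Γ := by
    intro k h
    rw [hπ]; simp only [dif_neg (not_lt.2 h)]
    exact Nat.nth_mem_of_infinite hq_inf _
  have hinj : Function.Injective π := by
    intro k1 k2 heq
    by_cases h1 : k1 < l.length <;> by_cases h2 : k2 < l.length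
    · rw [hπ] at heq; simp only [dif_pos h1, dif_pos h2] at heq
      have := (hnodup.get_inj_iff).1 heq
      exact congrArg Fin.val this
    · exact absurd (heq ▸ hπ_mem k1 h1) (hπ_nmem k2 (not_lt.1 h2))
    · exact absurd (heq ▸ hπ_nmem k1 (not_lt.1 h1)) (not_not.2 (hπ_mem k2 h2))
    · rw [hπ] at heq; simp only [dif_neg h1, dif_neg h2] at heq
      have := Nat.nth_injective hq_inf heq
      omega
  have hsurj : Function.Surjective π := by
    intro m
    by_cases hm : m ∈ Γ
    · obtain ⟨i, hi⟩ := List.mem_iff_get.1 ((hmem_l m).2 hm)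
      exact ⟨i.1, by rw [hπ]; simp only [dif_pos i.isLt]; exact hi⟩
    · refine ⟨l.length + Nat.count q m, ?_⟩
      have hnl : ¬ (l.length + Nat.count q m < l.length) := by omega
      simp only [hπ, dif_neg hnl, Nat.add_sub_cancel_left]
      exact Nat.nth_count hm
  have hcoeff : ∀ j, B.coeff j x = if j ∈ Γ then a j else 0 := fun j =>
    B.coeff_finsum j Γ a
  have habs : ∀ k, |B.coeff (π k) x| = if k < l.length then 1 else 0 := by
    intro k
    by_cases h : k < l.length
    · rw [if_pos h, hcoeff, if_pos (hπ_mem k h)]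
      exact ha _ (hπ_mem k h)
    · rw [if_neg h, hcoeff, if_neg (hπ_nmem k (not_lt.1 h))]
      simp
  have hgp : B.IsGreedyPerm x π := by
    refine ⟨⟨hinj, hsurj⟩, fun k => ?_⟩
    rw [habs, habs]
    by_cases h : k < l.length
    · rw [if_pos h]
      split <;> norm_num
    · rw [if_neg h, if_neg (by omega)]
  have hbound := (hK x π hgp Γ'.card).1
  have hG : B.G π Γ'.card x = ∑ k ∈ Γ', a k • B.e k := by
    have hπΓ' : ∀ k (h : k < Γ'.card), π k ∈ Γ' := by
      intro k h
      rw [hπ]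
      have hk : k < l.length := lt_of_lt_of_le h (hlen ▸ hcard)
      simp only [dif_pos hk]
      have hk' : k < (Γ'.sort (· ≤ ·)).length := by
        rwa [Finset.length_sort]
      have : l.get ⟨k, hk⟩ = (Γ'.sort (· ≤ ·)).get ⟨k, hk'⟩ := by
        simp only [hl, List.get_eq_getElem]
        exact List.getElem_append_left hk'
      rw [this]
      exact (Finset.mem_sort _).1 ((Γ'.sort (· ≤ ·)).get_mem ⟨k, hk'⟩)
    have himg : (Finset.range Γ'.card).image π = Γ' := by
      apply Finset.eq_of_subset_of_card_le
      · intro m hm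
        obtain ⟨k, hk, rfl⟩ := Finset.mem_image.1 hm
        exact hπΓ' k (Finset.mem_range.1 hk)
      · rw [Finset.card_image_of_injective _ hinj, Finset.card_range]
    rw [QGBasis.G]
    have : ∀ k ∈ Finset.range Γ'.card, B.coeff (π k) x • B.e (π k)
        = a (π k) • B.e (π k) := by
      intro k hk
      rw [hcoeff, if_pos (hsub (hπΓ' k (Finset.mem_range.1 hk)))]
    calc ∑ k ∈ Finset.range Γ'.card, B.coeff (π k) x • B.e (π k)
        = ∑ k ∈ Finset.range Γ'.card, a (π k) • B.e (π k) := Finset.sum_congr rfl this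
      _ = ∑ j ∈ (Finset.range Γ'.card).image π, a j • B.e j :=
          (Finset.sum_image (f := fun j => a j • B.e j) (g := π)
            (s := Finset.range Γ'.card) (fun x _ y _ h => hinj h)).symm
      _ = ∑ j ∈ Γ', a j • B.e j := by rw [himg]
  rw [hG] at hbound
  exact hbound

theorem sign_swap {K : ℝ} (hK : B.QuasiGreedyWith K)
    (Γ : Finset ℕ) (a b : ℕ → ℝ) (ha : ∀ k ∈ Γ, |a k| = 1)
    (hb : ∀ k ∈ Γ, |b k| = 1) :
    ‖∑ k ∈ Γ, b k • B.e k‖ ≤ 2 * K * ‖∑ k ∈ Γ, a k • B.e k‖ := by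
  classical
  set E : Finset ℕ := Γ.filter (fun k => a k = b k) with hE
  have hES : E ⊆ Γ := Finset.filter_subset _ _
  have hsplit : ∑ k ∈ Γ, b k • B.e k
      = (∑ k ∈ E, a k • B.e k) - ∑ k ∈ Γ \ E, a k • B.e k := by
    rw [← Finset.sum_sdiff (f := fun k => b k • B.e k) hES]
    have h1 : ∑ k ∈ E, b k • B.e k = ∑ k ∈ E, a k • B.e k :=
      Finset.sum_congr rfl (fun k hk => by rw [(Finset.mem_filter.1 hk).2])
    have h2 : ∑ k ∈ Γ \ E, b k • B.e k = - ∑ k ∈ Γ \ E, a k • B.e k := by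
      rw [← Finset.sum_neg_distrib]
      apply Finset.sum_congr rfl
      intro k hk
      obtain ⟨hkΓ, hkE⟩ := Finset.mem_sdiff.1 hk
      have hne : a k ≠ b k := fun h => hkE (Finset.mem_filter.2 ⟨hkΓ, h⟩)
      have ha' := ha k hkΓ
      have hb' := hb k hkΓ
      have hba : b k = - a k := by
        rcases (abs_eq one_pos.le).1 ha' with h | h <;>
          rcases (abs_eq one_pos.le).1 hb' with h' | h' <;>
          rw [h, h'] at hne ⊢ <;> norm_num at *
      rw [hba, neg_smul]
    rw [h1, h2]
    abel
  rw [hsplit]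
  have b1 := B.proj_bound hK hES a ha
  have b2 := B.proj_bound hK (Finset.sdiff_subset : Γ \ E ⊆ Γ) a ha
  calc ‖(∑ k ∈ E, a k • B.e k) - ∑ k ∈ Γ \ E, a k • B.e k‖
      ≤ ‖∑ k ∈ E, a k • B.e k‖ + ‖∑ k ∈ Γ \ E, a k • B.e k‖ := norm_sub_le _ _
    _ ≤ K * ‖∑ k ∈ Γ, a k • B.e k‖ + K * ‖∑ k ∈ Γ, a k • B.e k‖ := add_le_add b1 b2
    _ = 2 * K * ‖∑ k ∈ Γ, a k • B.e k‖ := by ring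

end QGBasis

set_option maxHeartbeats 1000000 in
/-- in a Banach space of type 2 (constant `T`) and cotype `p`
(constant `Cq`), a seminormalized quasi-greedy basis satisfies
`c|Γ|^{1/p} ≤ ‖∑_Γ e_k‖ ≤ C|Γ|^{1/2}`, and hence `μ(N) ≲ N^{1/2−1/p}`.
Type and cotype are expressed via averages over random signs. -/
theorem stmt17 {X : Type*} [NormedAddCommGroup X] [NormedSpace ℝ X] [CompleteSpace X]
    (p : ℝ) (hp : 2 ≤ p)
    (T : ℝ) (hT : 0 < T)
    (htype : ∀ (n : ℕ) (v : Fin n → X),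
      (∑ ε : Fin n → Bool, ‖∑ i, (if ε i then (1 : ℝ) else -1) • v i‖) / 2 ^ n ≤
        T * Real.sqrt (∑ i, ‖v i‖ ^ 2))
    (Cq : ℝ) (hCq : 0 < Cq)
    (hcotype : ∀ (n : ℕ) (v : Fin n → X),
      (∑ i, ‖v i‖ ^ p) ^ (1 / p) ≤
        Cq * ((∑ ε : Fin n → Bool, ‖∑ i, (if ε i then (1 : ℝ) else -1) • v i‖) / 2 ^ n))
    (B : QGBasis X) (K : ℝ) (hK : B.QuasiGreedyWith K) :
    ∃ c C C' : ℝ, 0 < c ∧ 0 < C ∧ 0 < C' ∧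
      (∀ Γ : Finset ℕ,
        c * (Γ.card : ℝ) ^ (1 / p) ≤ ‖∑ k ∈ Γ, B.e k‖ ∧
        ‖∑ k ∈ Γ, B.e k‖ ≤ C * Real.sqrt Γ.card) ∧
      (∀ N : ℕ, 1 ≤ N → B.mu N ≤ C' * (N : ℝ) ^ ((1 : ℝ) / 2 - 1 / p)) := by
  classical
  have hK1 : 1 ≤ K := B.one_le_K hK
  have hp0 : 0 < p := by linarith
  have h2K : (0:ℝ) < 2 * K := by linarith
  have hCnorm : 0 < B.C_norm := lt_of_lt_of_le B.c_norm_pos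
    (le_trans (B.norm_e_ge 0) (B.norm_e_le 0))
  set c : ℝ := B.c_norm / (2 * K * Cq) with hc_def
  set C : ℝ := 2 * K * T * B.C_norm with hC_def
  have hc : 0 < c := div_pos B.c_norm_pos (by positivity)
  have hC : 0 < C := by positivity
  have key : ∀ Γ : Finset ℕ,
      c * (Γ.card : ℝ) ^ (1 / p) ≤ ‖∑ k ∈ Γ, B.e k‖ ∧
      ‖∑ k ∈ Γ, B.e k‖ ≤ C * Real.sqrt Γ.card := by
    intro Γ
    set n := Γ.card with hn
    set v : Fin n → X := fun i => B.e ((Γ.equivFin.symm i : ℕ)) with hv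
    set S : ℝ := ‖∑ k ∈ Γ, B.e k‖ with hS
    -- rewriting signed sums
    have hrewrite : ∀ ε : Fin n → Bool, ∃ a : ℕ → ℝ, (∀ k, |a k| = 1) ∧
        ∑ i, (if ε i then (1 : ℝ) else -1) • v i = ∑ k ∈ Γ, a k • B.e k := by
      intro ε
      set a : ℕ → ℝ := fun k => if h : k ∈ Γ then
        (if ε (Γ.equivFin ⟨k, h⟩) then 1 else -1) else 1 with ha_def
      refine ⟨a, fun k => ?_, ?_⟩
      · simp only [ha_def]
        by_cases h : k ∈ Γ
        · rw [dif_pos h]; split <;> norm_num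
        · rw [dif_neg h]; norm_num
      · rw [← Finset.sum_coe_sort Γ (fun k => a k • B.e k)]
        rw [← Equiv.sum_comp Γ.equivFin.symm
          (fun x : {x // x ∈ Γ} => a (x:ℕ) • B.e (x:ℕ))]
        apply Finset.sum_congr rfl
        intro i _
        have hmem : ((Γ.equivFin.symm i : ℕ)) ∈ Γ := (Γ.equivFin.symm i).2
        have hsub : (⟨((Γ.equivFin.symm i : ℕ)), hmem⟩ : {x // x ∈ Γ})
            = Γ.equivFin.symm i := Subtype.ext rfl
        have hai : a ((Γ.equivFin.symm i : ℕ)) = if ε i then 1 else -1 := by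
          simp only [ha_def, dif_pos hmem]
          try rw [hsub, Equiv.apply_symm_apply]
        rw [hai]
    have hones : ∀ k ∈ Γ, |(1:ℝ)| = 1 := fun _ _ => abs_one
    have hsum_one : ∑ k ∈ Γ, (1:ℝ) • B.e k = ∑ k ∈ Γ, B.e k := by simp
    have hA : ∀ ε : Fin n → Bool,
        S ≤ 2 * K * ‖∑ i, (if ε i then (1 : ℝ) else -1) • v i‖ := by
      intro ε
      obtain ⟨a, ha, hae⟩ := hrewrite ε
      rw [hae]
      have := B.sign_swap hK Γ a (fun k => (1:ℝ)) (fun k _ => ha k) hones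
      rwa [hsum_one] at this
    have hB : ∀ ε : Fin n → Bool,
        ‖∑ i, (if ε i then (1 : ℝ) else -1) • v i‖ ≤ 2 * K * S := by
      intro ε
      obtain ⟨a, ha, hae⟩ := hrewrite ε
      rw [hae]
      have := B.sign_swap hK Γ (fun k => (1:ℝ)) a hones (fun k _ => ha k)
      rwa [hsum_one] at this
    set Savg : ℝ := (∑ ε : Fin n → Bool,
      ‖∑ i, (if ε i then (1 : ℝ) else -1) • v i‖) / 2 ^ n with hSavg
    have hcardfun : (Finset.univ : Finset (Fin n → Bool)).card = 2 ^ n := by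
      simp [Finset.card_univ]
    have havg_lb : S / (2 * K) ≤ Savg := by
      rw [hSavg, le_div_iff₀ (by positivity)]
      calc S / (2 * K) * 2 ^ n = ∑ _ε : Fin n → Bool, S / (2 * K) := by
            rw [Finset.sum_const, hcardfun, nsmul_eq_mul]; push_cast; ring
        _ ≤ _ := Finset.sum_le_sum (fun ε _ => by
            rw [div_le_iff₀ h2K]
            linarith [hA ε])
    have havg_ub : Savg ≤ 2 * K * S := by
      rw [hSavg, div_le_iff₀ (by positivity)]
      calc ∑ ε : Fin n → Bool, ‖∑ i, (if ε i then (1 : ℝ) else -1) • v i‖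
          ≤ ∑ _ε : Fin n → Bool, 2 * K * S := Finset.sum_le_sum (fun ε _ => hB ε)
        _ = 2 * K * S * 2 ^ n := by
            rw [Finset.sum_const, hcardfun, nsmul_eq_mul]; push_cast; ring
    constructor
    · -- lower bound via cotype
      have h1 : (n : ℝ) ^ (1 / p) * B.c_norm ≤ (∑ i, ‖v i‖ ^ p) ^ (1 / p) := by
        have hterm : ∀ i : Fin n, B.c_norm ^ p ≤ ‖v i‖ ^ p := fun i =>
          Real.rpow_le_rpow B.c_norm_pos.le (B.norm_e_ge _) hp0.le
        have hsum : (n : ℝ) * B.c_norm ^ p ≤ ∑ i, ‖v i‖ ^ p := by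
          calc (n : ℝ) * B.c_norm ^ p = ∑ _i : Fin n, B.c_norm ^ p := by
                rw [Finset.sum_const, Finset.card_univ, Fintype.card_fin,
                  nsmul_eq_mul]
            _ ≤ _ := Finset.sum_le_sum (fun i _ => hterm i)
        calc (n : ℝ) ^ (1 / p) * B.c_norm
            = ((n : ℝ) * B.c_norm ^ p) ^ (1 / p) := by
              rw [Real.mul_rpow (Nat.cast_nonneg n)
                  (Real.rpow_nonneg B.c_norm_pos.le p),
                ← Real.rpow_mul B.c_norm_pos.le,
                mul_one_div_cancel (ne_of_gt hp0), Real.rpow_one]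
          _ ≤ _ := Real.rpow_le_rpow
              (mul_nonneg (Nat.cast_nonneg n) (Real.rpow_nonneg B.c_norm_pos.le p))
              hsum (by positivity)
      have h2 : (∑ i, ‖v i‖ ^ p) ^ (1 / p) ≤ Cq * (2 * K * S) :=
        le_trans (hcotype n v) (by
          have := havg_ub
          nlinarith [havg_ub, hCq])
      have h3 : (n : ℝ) ^ (1 / p) * B.c_norm ≤ Cq * (2 * K * S) := le_trans h1 h2
      rw [hc_def]
      rw [div_mul_eq_mul_div, div_le_iff₀ (by positivity)]
      nlinarith [h3]
    · -- upper bound via type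
      have h1 : Real.sqrt (∑ i, ‖v i‖ ^ 2) ≤ B.C_norm * Real.sqrt n := by
        have hsum : ∑ i, ‖v i‖ ^ 2 ≤ (n : ℝ) * B.C_norm ^ 2 := by
          calc ∑ i, ‖v i‖ ^ 2 ≤ ∑ _i : Fin n, B.C_norm ^ 2 :=
                Finset.sum_le_sum (fun i _ =>
                  pow_le_pow_left₀ (norm_nonneg _) (B.norm_e_le _) 2)
            _ = (n : ℝ) * B.C_norm ^ 2 := by
                rw [Finset.sum_const, Finset.card_univ, Fintype.card_fin,
                  nsmul_eq_mul]
        calc Real.sqrt (∑ i, ‖v i‖ ^ 2) ≤ Real.sqrt ((n : ℝ) * B.C_norm ^ 2) :=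
              Real.sqrt_le_sqrt hsum
          _ = B.C_norm * Real.sqrt n := by
              rw [Real.sqrt_mul (Nat.cast_nonneg n), Real.sqrt_sq hCnorm.le]
              ring
      have h2 : S / (2 * K) ≤ T * (B.C_norm * Real.sqrt n) :=
        le_trans havg_lb (le_trans (htype n v) (by nlinarith [h1, hT]))
      rw [div_le_iff₀ h2K] at h2
      rw [hC_def]
      nlinarith [h2]
  refine ⟨c, C, C / c, hc, hC, div_pos hC hc, key, ?_⟩
  intro N hN
  have hexp : (0:ℝ) ≤ 1 / 2 - 1 / p := by
    have : 1 / p ≤ 1 / 2 := by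
      apply one_div_le_one_div_of_le <;> linarith
    linarith
  have hbound : ∀ k : ℕ, 1 ≤ k → k ≤ N →
      B.hr k / B.hl k ≤ C / c * (N : ℝ) ^ ((1:ℝ) / 2 - 1 / p) := by
    intro k hk1 hkN
    have hk0 : (0:ℝ) < k := by exact_mod_cast hk1
    have hhr : B.hr k ≤ C * Real.sqrt k := by
      apply Real.sSup_le
      · rintro r ⟨Γ, hΓ, rfl⟩
        have := (key Γ).2
        rwa [hΓ] at this
      · positivity
    have hhl : c * (k : ℝ) ^ (1 / p) ≤ B.hl k := by
      apply le_csInf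
      · exact ⟨‖∑ j ∈ Finset.range k, B.e j‖, Finset.range k, Finset.card_range k, rfl⟩
      · rintro r ⟨Γ, hΓ, rfl⟩
        have := (key Γ).1
        rwa [hΓ] at this
    have hhl0 : 0 < c * (k : ℝ) ^ (1 / p) := by positivity
    have hdiv : B.hr k / B.hl k ≤ (C * Real.sqrt k) / (c * (k : ℝ) ^ (1 / p)) :=
      div_le_div₀ (by positivity) hhr hhl0 hhl
    refine le_trans hdiv ?_
    rw [Real.sqrt_eq_rpow]
    rw [div_le_iff₀ (by positivity)]
    have hkk : (k:ℝ) ^ ((1:ℝ)/2 - 1/p) * (k:ℝ) ^ ((1:ℝ)/p) = (k:ℝ) ^ ((1:ℝ)/2) := by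
      rw [← Real.rpow_add hk0]
      congr 1
      ring
    have hrw : C * (k:ℝ) ^ ((1:ℝ)/2) = (C / c * (k : ℝ) ^ ((1:ℝ)/2 - 1/p)) *
        (c * (k : ℝ) ^ (1 / p)) := by
      rw [← hkk]
      field_simp
    rw [hrw]
    have hk_le : (k:ℝ) ^ ((1:ℝ)/2 - 1/p) ≤ (N:ℝ) ^ ((1:ℝ)/2 - 1/p) :=
      Real.rpow_le_rpow hk0.le (by exact_mod_cast hkN) hexp
    have : C / c * (k : ℝ) ^ ((1:ℝ)/2 - 1/p) ≤ C / c * (N:ℝ) ^ ((1:ℝ)/2 - 1/p) := by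
      apply mul_le_mul_of_nonneg_left hk_le (le_of_lt (div_pos hC hc))
    nlinarith [this, hhl0]
  rw [QGBasis.mu]
  apply Real.sSup_le
  · rintro r ⟨k, hk1, hkN, rfl⟩
    exact hbound k hk1 hkN
  · positivity
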